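/- arXiv:1303.5237 — 2 statements merged into one kernel-verified Lean document; each statement's English description precedes it below -/
import Mathlib

section
/- For the block lower bidiagonal matrix g with identity diagonal blocks and subdiagonal blocks g_2,...,g_N (g_1 := 0, g_{N+1} := 0), every eigenvalue λ of gᵀg satisfies λ ≥ min_k { 1 + σ_min(g_{k+1})² − σ_max(g_k) − σ_max(g_{k+1}) } whenever this minimum is nonnegative, and in any case λ ≥ max(0, min_k {1 + σ_min(g_{k+1})² − σ_max(g_k) − σ_max(g_{k+1})}). -/
open Matrix

/-- Block diagonal matrix with `N` diagonal blocks of size `n`. -/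
def blkDiag {N n : ℕ} (q : Fin N → Matrix (Fin n) (Fin n) ℝ) :
    Matrix (Fin N × Fin n) (Fin N × Fin n) ℝ :=
  fun p r => if p.1 = r.1 then q p.1 p.2 r.2 else 0

/-- Block lower bidiagonal matrix with identity diagonal blocks and subdiagonal
blocks; the block in position `(i, i-1)` (0-based) is `g (i+1)` (1-based paper index),
i.e. paper's `g_k` sits in (1-based) position `(k, k-1)` for `k = 2,…,N`. -/
def lowerBidiag (N n : ℕ) (g : ℕ → Matrix (Fin n) (Fin n) ℝ) :
    Matrix (Fin N × Fin n) (Fin N × Fin n) ℝ :=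
  fun p r =>
    if p.1 = r.1 then (if p.2 = r.2 then 1 else 0)
    else if (r.1 : ℕ) + 1 = (p.1 : ℕ) then g ((p.1 : ℕ) + 1) p.2 r.2
    else 0

theorem isHermitian_transpose_mul_self {m n α : Type*} [Fintype m] [CommSemiring α]
    [StarRing α] [TrivialStar α] (A : Matrix m n α) : (Aᵀ * A).IsHermitian := by
  rw [IsHermitian, conjTranspose_mul, conjTranspose_eq_transpose_of_trivial,
    conjTranspose_eq_transpose_of_trivial, transpose_transpose]

/-- Minimum eigenvalue of a Hermitian real matrix. -/
noncomputable def lamMin {ι : Type*} [Fintype ι] [DecidableEq ι]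
    (A : Matrix ι ι ℝ) (hA : A.IsHermitian) : ℝ := ⨅ i, hA.eigenvalues i

/-- Maximum eigenvalue of a Hermitian real matrix. -/
noncomputable def lamMax {ι : Type*} [Fintype ι] [DecidableEq ι]
    (A : Matrix ι ι ℝ) (hA : A.IsHermitian) : ℝ := ⨆ i, hA.eigenvalues i

/-- Minimum singular value: square root of the minimum eigenvalue of `Aᴴ * A`. -/
noncomputable def sigMin {ι : Type*} [Fintype ι] [DecidableEq ι]
    (A : Matrix ι ι ℝ) : ℝ :=
  Real.sqrt (lamMin (Aᴴ * A) (isHermitian_transpose_mul_self A))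

/-- Maximum singular value: square root of the maximum eigenvalue of `Aᴴ * A`. -/
noncomputable def sigMax {ι : Type*} [Fintype ι] [DecidableEq ι]
    (A : Matrix ι ι ℝ) : ℝ :=
  Real.sqrt (lamMax (Aᴴ * A) (isHermitian_transpose_mul_self A))

section Aux
variable {ι : Type*} [Fintype ι] [DecidableEq ι]

lemma spectral_sub_psd (A : Matrix ι ι ℝ) (hA : A.IsHermitian) :
    (A - lamMin A hA • (1 : Matrix ι ι ℝ)).PosSemidef := by
  set c := lamMin A hA with hc
  have hU := (Matrix.mem_unitaryGroup_iff).mp (hA.eigenvectorUnitary).2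
  have h1 : A - c • (1 : Matrix ι ι ℝ) =
      (hA.eigenvectorUnitary : Matrix ι ι ℝ) *
        diagonal (fun i => hA.eigenvalues i - c) *
        (hA.eigenvectorUnitary : Matrix ι ι ℝ)ᴴ := by
    have hd : diagonal (fun i => hA.eigenvalues i - c) =
        diagonal (RCLike.ofReal ∘ hA.eigenvalues) - c • (1 : Matrix ι ι ℝ) := by
      ext i j
      by_cases h : i = j <;>
        simp [Matrix.diagonal_apply, h, Matrix.one_apply, Matrix.sub_apply, RCLike.ofReal]
    rw [hd, Matrix.mul_sub, Matrix.sub_mul, ← Matrix.star_eq_conjTranspose,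
      ← Unitary.conjStarAlgAut_apply (S := ℝ) (x := diagonal (RCLike.ofReal ∘ hA.eigenvalues)),
      ← hA.spectral_theorem]
    congr 1
    rw [Matrix.mul_smul, Matrix.smul_mul, Matrix.mul_one, hU]
  rw [h1]
  refine (Matrix.posSemidef_diagonal_iff.mpr ?_).mul_mul_conjTranspose_same _
  intro i
  simp only [sub_nonneg, hc, lamMin]
  exact ciInf_le (Finite.bddBelow_range _) i

lemma rayleigh_min (A : Matrix ι ι ℝ) (hA : A.IsHermitian) (x : ι → ℝ) :
    lamMin A hA * (x ⬝ᵥ x) ≤ x ⬝ᵥ (A *ᵥ x) := by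
  have h := (spectral_sub_psd A hA).dotProduct_mulVec_nonneg x
  simp only [star_trivial, Matrix.sub_mulVec, Matrix.smul_mulVec, Matrix.one_mulVec,
    dotProduct_sub, dotProduct_smul, smul_eq_mul, sub_nonneg] at h
  exact h

lemma spectral_sub_psd' (A : Matrix ι ι ℝ) (hA : A.IsHermitian) :
    (lamMax A hA • (1 : Matrix ι ι ℝ) - A).PosSemidef := by
  set c := lamMax A hA with hc
  have hU := (Matrix.mem_unitaryGroup_iff).mp (hA.eigenvectorUnitary).2
  have h1 : c • (1 : Matrix ι ι ℝ) - A =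
      (hA.eigenvectorUnitary : Matrix ι ι ℝ) *
        diagonal (fun i => c - hA.eigenvalues i) *
        (hA.eigenvectorUnitary : Matrix ι ι ℝ)ᴴ := by
    have hd : diagonal (fun i => c - hA.eigenvalues i) =
        c • (1 : Matrix ι ι ℝ) - diagonal (RCLike.ofReal ∘ hA.eigenvalues) := by
      ext i j
      by_cases h : i = j <;>
        simp [Matrix.diagonal_apply, h, Matrix.one_apply, Matrix.sub_apply, RCLike.ofReal]
    rw [hd, Matrix.mul_sub, Matrix.sub_mul, ← Matrix.star_eq_conjTranspose,
      ← Unitary.conjStarAlgAut_apply (S := ℝ) (x := diagonal (RCLike.ofReal ∘ hA.eigenvalues)),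
      ← hA.spectral_theorem]
    congr 1
    rw [Matrix.mul_smul, Matrix.smul_mul, Matrix.mul_one, hU]
  rw [h1]
  refine (Matrix.posSemidef_diagonal_iff.mpr ?_).mul_mul_conjTranspose_same _
  intro i
  simp only [sub_nonneg, hc, lamMax]
  exact le_ciSup (Finite.bddAbove_range _) i

lemma rayleigh_max (A : Matrix ι ι ℝ) (hA : A.IsHermitian) (x : ι → ℝ) :
    x ⬝ᵥ (A *ᵥ x) ≤ lamMax A hA * (x ⬝ᵥ x) := by
  have h := (spectral_sub_psd' A hA).dotProduct_mulVec_nonneg x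
  simp only [star_trivial, Matrix.sub_mulVec, Matrix.smul_mulVec, Matrix.one_mulVec,
    dotProduct_sub, dotProduct_smul, smul_eq_mul, sub_nonneg] at h
  exact h

lemma dotProduct_self_nonneg (x : ι → ℝ) : 0 ≤ x ⬝ᵥ x :=
  Finset.sum_nonneg fun i _ => mul_self_nonneg _

lemma dot_BtB (B : Matrix ι ι ℝ) (u : ι → ℝ) :
    u ⬝ᵥ ((Bᴴ * B) *ᵥ u) = (B *ᵥ u) ⬝ᵥ (B *ᵥ u) := by
  rw [← Matrix.mulVec_mulVec, Matrix.dotProduct_mulVec, Matrix.vecMul_conjTranspose,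
    star_trivial, star_trivial]

lemma lamMin_BtB_nonneg (B : Matrix ι ι ℝ) :
    0 ≤ lamMin (Bᴴ * B) (isHermitian_transpose_mul_self B) := by
  rcases isEmpty_or_nonempty ι with h | h
  · simp [lamMin, Real.iInf_of_isEmpty]
  · exact le_ciInf fun i => Matrix.eigenvalues_conjTranspose_mul_self_nonneg B i

lemma sigMin_sq_bound (B : Matrix ι ι ℝ) (u : ι → ℝ) :
    sigMin B ^ 2 * (u ⬝ᵥ u) ≤ (B *ᵥ u) ⬝ᵥ (B *ᵥ u) := by
  rw [← dot_BtB, sigMin, Real.sq_sqrt (lamMin_BtB_nonneg B)]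
  exact rayleigh_min _ _ u

lemma sigMax_sq_bound (B : Matrix ι ι ℝ) (u : ι → ℝ) :
    (B *ᵥ u) ⬝ᵥ (B *ᵥ u) ≤ sigMax B ^ 2 * (u ⬝ᵥ u) := by
  have h0 : 0 ≤ lamMax (Bᴴ * B) (isHermitian_transpose_mul_self B) := by
    rcases isEmpty_or_nonempty ι with h | h
    · simp [lamMax, iInf, Real.iSup_of_isEmpty]
    · exact le_trans (Matrix.eigenvalues_conjTranspose_mul_self_nonneg B (Classical.arbitrary ι))
        (le_ciSup (Finite.bddAbove_range _) _)
  rw [← dot_BtB, sigMax, Real.sq_sqrt h0]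
  exact rayleigh_max _ _ u

lemma sigMax_nonneg (B : Matrix ι ι ℝ) : 0 ≤ sigMax B := Real.sqrt_nonneg _

lemma cross_bound (B : Matrix ι ι ℝ) (u v : ι → ℝ) :
    -(sigMax B * (u ⬝ᵥ u + v ⬝ᵥ v)) ≤ 2 * (v ⬝ᵥ (B *ᵥ u)) := by
  set t := v ⬝ᵥ (B *ᵥ u) with ht
  set a := u ⬝ᵥ u
  set b := v ⬝ᵥ v
  have ha : 0 ≤ a := dotProduct_self_nonneg u
  have hb : 0 ≤ b := dotProduct_self_nonneg v
  have hcs : t ^ 2 ≤ b * ((B *ᵥ u) ⬝ᵥ (B *ᵥ u)) := by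
    have := Finset.sum_mul_sq_le_sq_mul_sq Finset.univ v (B *ᵥ u)
    simpa [ht, dotProduct, pow_two, b] using this
  have h2 : t ^ 2 ≤ (sigMax B * (Real.sqrt a * Real.sqrt b)) ^ 2 := by
    calc t ^ 2 ≤ b * ((B *ᵥ u) ⬝ᵥ (B *ᵥ u)) := hcs
    _ ≤ b * (sigMax B ^ 2 * a) := by
        exact mul_le_mul_of_nonneg_left (sigMax_sq_bound B u) hb
    _ = (sigMax B * (Real.sqrt a * Real.sqrt b)) ^ 2 := by
        rw [mul_pow, mul_pow, Real.sq_sqrt ha, Real.sq_sqrt hb]; ring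
  have habs : |t| ≤ sigMax B * (Real.sqrt a * Real.sqrt b) := by
    have hnn : 0 ≤ sigMax B * (Real.sqrt a * Real.sqrt b) :=
      mul_nonneg (sigMax_nonneg B) (by positivity)
    calc |t| = Real.sqrt (t ^ 2) := (Real.sqrt_sq_eq_abs t).symm
    _ ≤ Real.sqrt ((sigMax B * (Real.sqrt a * Real.sqrt b)) ^ 2) := Real.sqrt_le_sqrt h2
    _ = sigMax B * (Real.sqrt a * Real.sqrt b) := by
        rw [Real.sqrt_sq_eq_abs]; exact abs_of_nonneg hnn
  have hamgm : 2 * (Real.sqrt a * Real.sqrt b) ≤ a + b := by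
    nlinarith [sq_nonneg (Real.sqrt a - Real.sqrt b), Real.sq_sqrt ha, Real.sq_sqrt hb]
  have := neg_abs_le t
  nlinarith [sigMax_nonneg B, abs_nonneg t]

lemma sigMax_zero_mat : sigMax (0 : Matrix ι ι ℝ) = 0 := by
  rcases isEmpty_or_nonempty ι with h | h
  · simp [sigMax, lamMax, iInf, Real.iSup_of_isEmpty]
  · have h0 : ∀ i, (isHermitian_transpose_mul_self (0 : Matrix ι ι ℝ)).eigenvalues i = 0 := by
      intro i
      have h1 := (isHermitian_transpose_mul_self (0 : Matrix ι ι ℝ)).mulVec_eigenvectorBasis i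
      set lam := (isHermitian_transpose_mul_self (0 : Matrix ι ι ℝ)).eigenvalues i
      set y := (isHermitian_transpose_mul_self (0 : Matrix ι ι ℝ)).eigenvectorBasis i
      by_contra hlam
      have h2 : (⇑y : ι → ℝ) = 0 := by
        have : (0 : Matrix ι ι ℝ) *ᵥ ⇑y = 0 := Matrix.zero_mulVec _
        rw [mul_zero, this] at h1
        funext j
        have := congrFun h1 j
        simp only [Pi.zero_apply, Pi.smul_apply, smul_eq_mul] at this
        have := this.symm
        rcases mul_eq_zero.mp this with h | h
        · exact absurd h hlam
        · exact h
      have h3 : ‖y‖ = 1 :=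
        (isHermitian_transpose_mul_self (0 : Matrix ι ι ℝ)).eigenvectorBasis.orthonormal.1 i
      have h4 : y = 0 := by
        ext j
        exact congrFun h2 j
      rw [h4] at h3
      simp at h3
    have h5 : lamMax ((0 : Matrix ι ι ℝ)ᴴ * 0) (isHermitian_transpose_mul_self 0) = 0 := by
      show (⨆ i, (isHermitian_transpose_mul_self (0 : Matrix ι ι ℝ)).eigenvalues i) = 0
      simp only [h0, ciSup_const]
    rw [sigMax, h5, Real.sqrt_zero]

set_option maxHeartbeats 1000000 in
theorem stmt2_aux (N n : ℕ) [NeZero N] [NeZero n]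
    (g : ℕ → Matrix (Fin n) (Fin n) ℝ)
    (hg1 : g 1 = 0) (hgN1 : g (N + 1) = 0)
    (G : Matrix (Fin N × Fin n) (Fin N × Fin n) ℝ)
    (hGdef : G = fun p r =>
      if p.1 = r.1 then (if p.2 = r.2 then 1 else 0)
      else if (r.1 : ℕ) + 1 = (p.1 : ℕ) then g ((p.1 : ℕ) + 1) p.2 r.2
      else 0)
    (hne : (Finset.Icc 1 N).Nonempty)
    (m : ℝ)
    (hm : m = (Finset.Icc 1 N).inf' hne
        (fun k => 1 + sigMin (g (k + 1)) ^ 2 - sigMax (g k) - sigMax (g (k + 1)))) :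
    ∀ i, m ≤ (isHermitian_transpose_mul_self G).eigenvalues i := by
  intro i
  set hA := isHermitian_transpose_mul_self G with hhA
  set x : (Fin N × Fin n) → ℝ := ⇑(hA.eigenvectorBasis i) with hxdef
  -- norm one
  have hnorm : x ⬝ᵥ x = 1 := by
    have h1 : ‖hA.eigenvectorBasis i‖ = 1 := hA.eigenvectorBasis.orthonormal.1 i
    have h2 : (x ⬝ᵥ x) = (inner ℝ (hA.eigenvectorBasis i) (hA.eigenvectorBasis i) : ℝ) := by
      rw [PiLp.inner_apply]
      simp [dotProduct, hxdef, pow_two]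
    rw [h2, real_inner_self_eq_norm_sq, h1, one_pow]
  -- eigenvalue as ‖Gx‖²
  have heig : hA.eigenvalues i = (G *ᵥ x) ⬝ᵥ (G *ᵥ x) := by
    have h1 : (Gᴴ * G) *ᵥ x = hA.eigenvalues i • x := hA.mulVec_eigenvectorBasis i
    have h2 : x ⬝ᵥ ((Gᴴ * G) *ᵥ x) = hA.eigenvalues i := by
      rw [h1, dotProduct_smul, smul_eq_mul, hnorm, mul_one]
    rw [← h2, dot_BtB]
  -- block components
  set v : ℕ → Fin n → ℝ := fun k j => if h : k < N then x (⟨k, h⟩, j) else 0 with hvdef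
  have hvk : ∀ (k : Fin N) (j : Fin n), v (k : ℕ) j = x (k, j) := by
    intro k j
    simp [hvdef, k.isLt]
  have hGx : ∀ (k : Fin N) (j : Fin n),
      (G *ᵥ x) (k, j) = v (k : ℕ) j + (g ((k : ℕ) + 1) *ᵥ v ((k : ℕ) - 1)) j := by
    intro k j
    have hexp : (G *ᵥ x) (k, j)
        = ∑ l : Fin N, ∑ o : Fin n, G (k, j) (l, o) * x (l, o) := by
      rw [Matrix.mulVec, dotProduct, Fintype.sum_prod_type]
    rw [hexp]
    have hsplit : ∀ l : Fin N, (∑ o : Fin n, G (k, j) (l, o) * x (l, o))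
        = (if k = l then x (k, j) else 0)
          + (if (l : ℕ) + 1 = (k : ℕ) then ∑ o : Fin n, g ((k : ℕ) + 1) j o * x (l, o)
             else 0) := by
      intro l
      by_cases hkl : k = l
      · subst hkl
        have hno : ¬((k : ℕ) + 1 = (k : ℕ)) := by omega
        simp only [hGdef, hno, if_true, if_false, ite_mul, one_mul, zero_mul, if_pos rfl]
        rw [Finset.sum_ite_eq (Finset.univ : Finset (Fin n)) j (fun o => x (k, o))]
        simp
      · simp only [hGdef, if_neg hkl, ite_mul, zero_mul]
        by_cases hl : (l : ℕ) + 1 = (k : ℕ)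
        · simp [hl]
        · simp [hl]
    rw [Finset.sum_congr rfl (fun l _ => hsplit l), Finset.sum_add_distrib]
    congr 1
    · rw [Finset.sum_ite_eq (Finset.univ : Finset (Fin N)) k (fun l => x (k, j))]
      simp [hvk]
    · by_cases hk0 : (k : ℕ) = 0
      · have hno : ∀ l : Fin N, ¬((l : ℕ) + 1 = (k : ℕ)) := by intro l; omega
        rw [Finset.sum_eq_zero (fun l _ => by rw [if_neg (hno l)])]
        have : g ((k : ℕ) + 1) = 0 := by rw [hk0]; exact hg1
        rw [this, Matrix.zero_mulVec]
        simp
      · obtain ⟨k', hk'⟩ : ∃ k', (k : ℕ) = k' + 1 :=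
          ⟨(k : ℕ) - 1, (Nat.succ_pred_eq_of_pos (Nat.pos_of_ne_zero hk0)).symm⟩
        have hk'N : k' < N := by have := k.isLt; omega
        have hcond : ∀ l : Fin N, ((l : ℕ) + 1 = (k : ℕ)) ↔ ((⟨k', hk'N⟩ : Fin N) = l) := by
          intro l
          constructor
          · intro h
            apply Fin.ext
            show k' = (l : ℕ)
            omega
          · intro h; rw [← h]; show k' + 1 = (k : ℕ); omega
        have hrw : ∀ l : Fin N,
            (if (l : ℕ) + 1 = (k : ℕ) then ∑ o : Fin n, g ((k : ℕ) + 1) j o * x (l, o) else 0)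
            = (if (⟨k', hk'N⟩ : Fin N) = l then ∑ o : Fin n, g ((k : ℕ) + 1) j o * x (l, o)
               else 0) := by
          intro l
          by_cases h : (l : ℕ) + 1 = (k : ℕ)
          · rw [if_pos h, if_pos ((hcond l).mp h)]
          · rw [if_neg h, if_neg (fun hc => h ((hcond l).mpr hc))]
        rw [Finset.sum_congr rfl (fun l _ => hrw l),
          Finset.sum_ite_eq (Finset.univ : Finset (Fin N)) (⟨k', hk'N⟩ : Fin N)
            (fun l => ∑ o : Fin n, g ((k : ℕ) + 1) j o * x (l, o))]
        simp only [Finset.mem_univ, if_true]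
        rw [Matrix.mulVec, dotProduct]
        congr 1
        funext o
        congr 1
        have hkm : (k : ℕ) - 1 = k' := by omega
        rw [hkm, hvdef]
        simp only [hk'N, dif_pos]
  -- abbreviations
  set a : ℕ → ℝ := fun k => v k ⬝ᵥ v k with hadef
  set c : ℕ → ℝ := fun k => v k ⬝ᵥ (g (k + 1) *ᵥ v (k - 1)) with hcdef
  set b : ℕ → ℝ := fun k => (g (k + 1) *ᵥ v (k - 1)) ⬝ᵥ (g (k + 1) *ᵥ v (k - 1)) with hbdef
  set σ : ℕ → ℝ := fun k => sigMax (g k) with hσdef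
  obtain ⟨M, hM⟩ : ∃ M, N = M + 1 :=
    ⟨N - 1, by have := Nat.pos_of_ne_zero (NeZero.ne N); omega⟩
  have hgM2 : g (M + 2) = 0 := by rw [hM] at hgN1; exact hgN1
  have ha_nonneg : ∀ k, 0 ≤ a k := fun k => dotProduct_self_nonneg _
  -- total norm as sum of block norms
  have hsum_a : ∑ k ∈ Finset.range N, a k = 1 := by
    rw [← hnorm, dotProduct, Fintype.sum_prod_type,
      ← Fin.sum_univ_eq_sum_range (fun k => a k) N]
    refine Finset.sum_congr rfl fun k _ => ?_
    show (v (k : ℕ)) ⬝ᵥ (v (k : ℕ)) = _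
    rw [dotProduct]
    exact Finset.sum_congr rfl fun j _ => by rw [hvk]
  -- eigenvalue expansion
  have heig2 : hA.eigenvalues i = ∑ k ∈ Finset.range N, (a k + 2 * c k + b k) := by
    rw [heig, dotProduct, Fintype.sum_prod_type,
      ← Fin.sum_univ_eq_sum_range (fun k => a k + 2 * c k + b k) N]
    refine Finset.sum_congr rfl fun k _ => ?_
    have h1 : ∀ j : Fin n, (G *ᵥ x) (k, j) * (G *ᵥ x) (k, j)
        = v (k : ℕ) j * v (k : ℕ) j
          + 2 * (v (k : ℕ) j * (g ((k : ℕ) + 1) *ᵥ v ((k : ℕ) - 1)) j)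
          + ((g ((k : ℕ) + 1) *ᵥ v ((k : ℕ) - 1)) j
              * (g ((k : ℕ) + 1) *ᵥ v ((k : ℕ) - 1)) j) := by
      intro j
      rw [hGx]
      ring
    rw [Finset.sum_congr rfl (fun j _ => h1 j), Finset.sum_add_distrib,
      Finset.sum_add_distrib, ← Finset.mul_sum]
    rfl
  -- shift identities
  have hshift_b : ∑ k ∈ Finset.range N, b k
      = ∑ k ∈ Finset.range N, ((g (k + 2) *ᵥ v k) ⬝ᵥ (g (k + 2) *ᵥ v k)) := by
    rw [hM, Finset.sum_range_succ' (fun k => b k) M,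
      Finset.sum_range_succ (fun k => (g (k + 2) *ᵥ v k) ⬝ᵥ (g (k + 2) *ᵥ v k)) M]
    have hb0 : b 0 = 0 := by
      show (g 1 *ᵥ v 0) ⬝ᵥ (g 1 *ᵥ v 0) = (0 : ℝ)
      rw [hg1, Matrix.zero_mulVec, zero_dotProduct]
    have hbM : (g (M + 2) *ᵥ v M) ⬝ᵥ (g (M + 2) *ᵥ v M) = 0 := by
      rw [hgM2, Matrix.zero_mulVec, zero_dotProduct]
    rw [hb0, hbM, add_zero, add_zero]
    exact Finset.sum_congr rfl fun k _ => rfl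
  have hsig1 : σ 1 = 0 := by
    show sigMax (g 1) = 0
    rw [hg1]; exact sigMax_zero_mat
  have hsigM2 : σ (M + 2) = 0 := by
    show sigMax (g (M + 2)) = 0
    rw [hgM2]; exact sigMax_zero_mat
  have hshift_d : ∑ k ∈ Finset.range N, σ (k + 1) * a (k - 1)
      = ∑ k ∈ Finset.range N, σ (k + 2) * a k := by
    rw [hM, Finset.sum_range_succ' (fun k => σ (k + 1) * a (k - 1)) M,
      Finset.sum_range_succ (fun k => σ (k + 2) * a k) M]
    rw [hsig1, hsigM2, zero_mul, zero_mul, add_zero, add_zero]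
    exact Finset.sum_congr rfl fun k _ => rfl
  -- termwise bounds
  have hbound_b : ∀ k, sigMin (g (k + 2)) ^ 2 * a k
      ≤ (g (k + 2) *ᵥ v k) ⬝ᵥ (g (k + 2) *ᵥ v k) := fun k => sigMin_sq_bound _ _
  have hbound_c : ∀ k, -(σ (k + 1) * (a (k - 1) + a k)) ≤ 2 * c k :=
    fun k => cross_bound (g (k + 1)) (v (k - 1)) (v k)
  have hm_le : ∀ k, k < N → m ≤ 1 + sigMin (g (k + 2)) ^ 2 - σ (k + 1) - σ (k + 2) := by
    intro k hk
    rw [hm]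
    have hmem : k + 1 ∈ Finset.Icc 1 N := by
      rw [Finset.mem_Icc]; omega
    exact Finset.inf'_le _ hmem
  -- the key sum inequality
  have key : ∑ k ∈ Finset.range N, (1 + sigMin (g (k + 2)) ^ 2 - σ (k + 1) - σ (k + 2)) * a k
      ≤ ∑ k ∈ Finset.range N, (a k + 2 * c k + b k) := by
    have e1 : ∑ k ∈ Finset.range N, (1 + sigMin (g (k + 2)) ^ 2 - σ (k + 1) - σ (k + 2)) * a k
        = ((∑ k ∈ Finset.range N, a k)
            - (∑ k ∈ Finset.range N, σ (k + 1) * a k)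
            - (∑ k ∈ Finset.range N, σ (k + 2) * a k))
          + ∑ k ∈ Finset.range N, sigMin (g (k + 2)) ^ 2 * a k := by
      rw [← Finset.sum_sub_distrib, ← Finset.sum_sub_distrib, ← Finset.sum_add_distrib]
      exact Finset.sum_congr rfl fun k _ => by ring
    have e2 : ∑ k ∈ Finset.range N, (a k + 2 * c k + b k)
        = (∑ k ∈ Finset.range N, a k) + (∑ k ∈ Finset.range N, 2 * c k)
          + ∑ k ∈ Finset.range N, b k := by
      rw [Finset.sum_add_distrib, Finset.sum_add_distrib]
    have i1 : ∑ k ∈ Finset.range N, sigMin (g (k + 2)) ^ 2 * a k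
        ≤ ∑ k ∈ Finset.range N, b k := by
      rw [hshift_b]
      exact Finset.sum_le_sum fun k _ => hbound_b k
    have i2 : -(∑ k ∈ Finset.range N, σ (k + 1) * a k)
          - (∑ k ∈ Finset.range N, σ (k + 2) * a k)
        ≤ ∑ k ∈ Finset.range N, 2 * c k := by
      have h3 : ∑ k ∈ Finset.range N, -(σ (k + 1) * (a (k - 1) + a k))
          ≤ ∑ k ∈ Finset.range N, 2 * c k :=
        Finset.sum_le_sum fun k _ => hbound_c k
      have e3 : ∑ k ∈ Finset.range N, -(σ (k + 1) * (a (k - 1) + a k))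
          = -(∑ k ∈ Finset.range N, σ (k + 1) * a (k - 1))
            - ∑ k ∈ Finset.range N, σ (k + 1) * a k := by
        have e4 : ∀ k, -(σ (k + 1) * (a (k - 1) + a k))
            = (-(σ (k + 1) * a (k - 1))) + (-(σ (k + 1) * a k)) := fun k => by ring
        rw [Finset.sum_congr rfl (fun k _ => e4 k), Finset.sum_add_distrib,
          Finset.sum_neg_distrib, Finset.sum_neg_distrib]
        ring
      rw [e3, hshift_d] at h3
      linarith
    linarith
  -- conclusion
  calc m = m * ∑ k ∈ Finset.range N, a k := by rw [hsum_a, mul_one]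
  _ = ∑ k ∈ Finset.range N, m * a k := Finset.mul_sum _ _ _
  _ ≤ ∑ k ∈ Finset.range N, (1 + sigMin (g (k + 2)) ^ 2 - σ (k + 1) - σ (k + 2)) * a k :=
      Finset.sum_le_sum fun k hk =>
        mul_le_mul_of_nonneg_right (hm_le k (Finset.mem_range.mp hk)) (ha_nonneg k)
  _ ≤ ∑ k ∈ Finset.range N, (a k + 2 * c k + b k) := key
  _ = hA.eigenvalues i := heig2.symm

end Aux

/-- Every eigenvalue `λ` of `gᵀg` satisfies
`λ ≥ max(0, min_{1 ≤ k ≤ N} { 1 + σ_min(g_{k+1})² − σ_max(g_k) − σ_max(g_{k+1}) })`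
(with conventions `g_1 = 0`, `g_{N+1} = 0`); in particular `λ` is at least the minimum
whenever the minimum is nonnegative. -/

theorem stmt2 (N n : ℕ) [NeZero N] [NeZero n]
    (g : ℕ → Matrix (Fin n) (Fin n) ℝ)
    (hg1 : g 1 = 0) (hgN1 : g (N + 1) = 0)
    (G : Matrix (Fin N × Fin n) (Fin N × Fin n) ℝ) (hGdef : G = lowerBidiag N n g)
    (hne : (Finset.Icc 1 N).Nonempty)
    (m : ℝ)
    (hm : m = (Finset.Icc 1 N).inf' hne
        (fun k => 1 + sigMin (g (k + 1)) ^ 2 - sigMax (g k) - sigMax (g (k + 1)))) :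
    (∀ i, max 0 m ≤ (isHermitian_transpose_mul_self G).eigenvalues i) ∧
      (0 ≤ m → ∀ i, m ≤ (isHermitian_transpose_mul_self G).eigenvalues i) := by
  have h0 : ∀ i, 0 ≤ (isHermitian_transpose_mul_self G).eigenvalues i :=
    fun i => Matrix.eigenvalues_conjTranspose_mul_self_nonneg G i
  have hmain : ∀ i, m ≤ (isHermitian_transpose_mul_self G).eigenvalues i :=
    stmt2_aux N n g hg1 hgN1 G (by rw [hGdef]; rfl) hne m hm
  exact ⟨fun i => max_le (h0 i) (hmain i), fun _ => hmain⟩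
end

section
/- Let A be a symmetric positive definite block tridiagonal matrix with blocks b_k (diagonal) and c_k (subdiagonal), and let d_k^f and d_k^b denote the forward and backward Schur complement recursions (d_1^f = b_1, d_k^f = b_k − c_k (d_{k−1}^f)⁻¹ c_kᵀ; d_N^b = b_N, d_k^b = b_k − c_{k+1}ᵀ (d_{k+1}^b)⁻¹ c_{k+1}). If 0 < α_L ≤ λ_min(A) and λ_max(A) ≤ α_U, then for every k, α_L ≤ λ_min(d_k^f + d_k^b − b_k) ≤ λ_max(d_k^f + d_k^b − b_k) ≤ α_U. -/
open Matrix

/-- Symmetric block tridiagonal matrix with `N` diagonal blocks `b 0, …, b (N-1)` of size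
`n`, subdiagonal blocks `c i` in (0-based) position `(i, i-1)` for `i = 1,…,N-1`, and the
transposes `(c (i+1))ᵀ` in position `(i, i+1)`. -/
def blockTri (N n : ℕ) (b c : ℕ → Matrix (Fin n) (Fin n) ℝ) :
    Matrix (Fin N × Fin n) (Fin N × Fin n) ℝ :=
  fun p r =>
    if p.1 = r.1 then b (p.1 : ℕ) p.2 r.2
    else if (r.1 : ℕ) + 1 = (p.1 : ℕ) then c (p.1 : ℕ) p.2 r.2
    else if (p.1 : ℕ) + 1 = (r.1 : ℕ) then c (r.1 : ℕ) r.2 p.2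
    else 0

/-- Forward (Thomas) block elimination: `d 0 = b 0`,
`d (k+1) = b (k+1) − c (k+1) (d k)⁻¹ (c (k+1))ᵀ`. -/
noncomputable def fwdD {n : ℕ} (b c : ℕ → Matrix (Fin n) (Fin n) ℝ) :
    ℕ → Matrix (Fin n) (Fin n) ℝ
  | 0 => b 0
  | k + 1 => b (k + 1) - c (k + 1) * (fwdD b c k)⁻¹ * (c (k + 1))ᵀ

/-- Auxiliary backward elimination sequence: `bwdAux N b c j` is the backward Schur
complement at block index `N - 1 - j`. -/
noncomputable def bwdAux {n : ℕ} (N : ℕ) (b c : ℕ → Matrix (Fin n) (Fin n) ℝ) :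
    ℕ → Matrix (Fin n) (Fin n) ℝ
  | 0 => b (N - 1)
  | j + 1 => b (N - 1 - (j + 1)) - (c (N - 1 - j))ᵀ * (bwdAux N b c j)⁻¹ * c (N - 1 - j)

/-- Backward block elimination: `bwdD N b c (N-1) = b (N-1)` and
`bwdD N b c k = b k − (c (k+1))ᵀ (bwdD N b c (k+1))⁻¹ (c (k+1))` for `k < N-1`. -/
noncomputable def bwdD {n : ℕ} (N : ℕ) (b c : ℕ → Matrix (Fin n) (Fin n) ℝ) (k : ℕ) :
    Matrix (Fin n) (Fin n) ℝ :=
  bwdAux N b c (N - 1 - k)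

/-- Forward elimination of the right-hand side: `s 0 = r 0`,
`s (k+1) = r (k+1) − c (k+1) (d k)⁻¹ s k`. -/
noncomputable def fwdS {n : ℕ} (b c : ℕ → Matrix (Fin n) (Fin n) ℝ)
    (r : ℕ → Fin n → ℝ) : ℕ → Fin n → ℝ
  | 0 => r 0
  | k + 1 => r (k + 1) - (c (k + 1) * (fwdD b c k)⁻¹) *ᵥ (fwdS b c r k)

/-- Auxiliary backward elimination of the right-hand side. -/
noncomputable def bwdSAux {n : ℕ} (N : ℕ) (b c : ℕ → Matrix (Fin n) (Fin n) ℝ)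
    (r : ℕ → Fin n → ℝ) : ℕ → Fin n → ℝ
  | 0 => r (N - 1)
  | j + 1 => r (N - 1 - (j + 1)) -
      ((c (N - 1 - j))ᵀ * (bwdAux N b c j)⁻¹) *ᵥ (bwdSAux N b c r j)

/-- Backward elimination of the right-hand side:
`bwdS N b c r k = r k − (c (k+1))ᵀ (bwdD N b c (k+1))⁻¹ (bwdS N b c r (k+1))`. -/
noncomputable def bwdS {n : ℕ} (N : ℕ) (b c : ℕ → Matrix (Fin n) (Fin n) ℝ)
    (r : ℕ → Fin n → ℝ) (k : ℕ) : Fin n → ℝ :=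
  bwdSAux N b c r (N - 1 - k)
section MFaux
open Matrix Finset


/-- block quadratic form -/
noncomputable def Qf (N n : ℕ) (b c : ℕ → Matrix (Fin n) (Fin n) ℝ)
    (y : ℕ → Fin n → ℝ) : ℝ :=
  (∑ j ∈ Finset.range N, y j ⬝ᵥ (b j *ᵥ y j))
    + 2 * ∑ j ∈ Finset.Ico 1 N, y j ⬝ᵥ (c j *ᵥ y (j - 1))


/-- Quadratic form bounds from eigenvalue bounds, real symmetric case. -/
lemma quad_bounds {m : Type*} [Fintype m] [DecidableEq m] {A : Matrix m m ℝ}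
    (hA : A.IsHermitian) {αL αU : ℝ}
    (h : ∀ i, αL ≤ hA.eigenvalues i ∧ hA.eigenvalues i ≤ αU) (x : m → ℝ) :
    αL * (x ⬝ᵥ x) ≤ x ⬝ᵥ (A *ᵥ x) ∧ x ⬝ᵥ (A *ᵥ x) ≤ αU * (x ⬝ᵥ x) := by
  classical
  set U : Matrix m m ℝ := (hA.eigenvectorUnitary : Matrix m m ℝ) with hU
  have hUU : U * star U = 1 := (Matrix.mem_unitaryGroup_iff).mp hA.eigenvectorUnitary.2
  set z : m → ℝ := star U *ᵥ x with hz
  have key : ∀ M : Matrix m m ℝ, x ⬝ᵥ ((U * M * star U) *ᵥ x) = z ⬝ᵥ (M *ᵥ z) := by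
    intro M
    rw [← mulVec_mulVec, ← mulVec_mulVec, dotProduct_mulVec x U, hz]
    congr 1
    rw [star_eq_conjTranspose, conjTranspose_eq_transpose_of_trivial, mulVec_transpose]
  have hd : x ⬝ᵥ (A *ᵥ x) = ∑ i, hA.eigenvalues i * (z i)^2 := by
    conv_lhs => rw [hA.spectral_theorem, Unitary.conjStarAlgAut_apply]
    rw [key]
    simp [dotProduct, mulVec_diagonal, Function.comp]
    exact Finset.sum_congr rfl fun i _ => by ring
  have hn : x ⬝ᵥ x = ∑ i, (z i)^2 := by
    have : x ⬝ᵥ x = x ⬝ᵥ ((U * 1 * star U) *ᵥ x) := by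
      rw [mul_one, hUU, one_mulVec]
    rw [this, key]
    simp [dotProduct]
    exact Finset.sum_congr rfl fun i _ => by ring
  constructor
  · rw [hd, hn, Finset.mul_sum]
    exact Finset.sum_le_sum fun i _ =>
      mul_le_mul_of_nonneg_right (h i).1 (sq_nonneg _)
  · rw [hd, hn, Finset.mul_sum]
    exact Finset.sum_le_sum fun i _ =>
      mul_le_mul_of_nonneg_right (h i).2 (sq_nonneg _)

/-- Eigenvalue bounds from quadratic form bounds, real symmetric case. -/
lemma eig_bounds {m : Type*} [Fintype m] [DecidableEq m] {M : Matrix m m ℝ}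
    (hM : M.IsHermitian) {αL αU : ℝ}
    (h : ∀ x : m → ℝ, αL * (x ⬝ᵥ x) ≤ x ⬝ᵥ (M *ᵥ x) ∧ x ⬝ᵥ (M *ᵥ x) ≤ αU * (x ⬝ᵥ x))
    (i : m) : αL ≤ hM.eigenvalues i ∧ hM.eigenvalues i ≤ αU := by
  set v : m → ℝ := ⇑(hM.eigenvectorBasis i) with hv
  have hvv : v ⬝ᵥ v = 1 := by
    have h1 : ‖hM.eigenvectorBasis i‖ = 1 := hM.eigenvectorBasis.orthonormal.1 i
    have h2 : (inner ℝ (hM.eigenvectorBasis i) (hM.eigenvectorBasis i) : ℝ) = 1 := by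
      rw [real_inner_self_eq_norm_sq, h1]; norm_num
    rw [← h2]
    simp only [dotProduct, PiLp.inner_apply, hv, RCLike.inner_apply, conj_trivial]
  have hq : v ⬝ᵥ (M *ᵥ v) = hM.eigenvalues i := by
    rw [hM.mulVec_eigenvectorBasis, dotProduct_smul, hvv]
    simp
  have := h v
  rw [hvv, hq, mul_one, mul_one] at this
  exact this
lemma Qform (N n : ℕ) (b c : ℕ → Matrix (Fin n) (Fin n) ℝ) (y : ℕ → Fin n → ℝ) :
    (fun p : Fin N × Fin n => y p.1 p.2) ⬝ᵥ
      (blockTri N n b c *ᵥ fun p : Fin N × Fin n => y p.1 p.2) = Qf N n b c y := by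
  classical
  set T : ℕ → ℕ → ℝ := fun k l =>
    if k = l then y k ⬝ᵥ (b k *ᵥ y k)
    else if l + 1 = k then y k ⬝ᵥ (c k *ᵥ y l)
    else if k + 1 = l then y l ⬝ᵥ (c l *ᵥ y k) else 0 with hT
  set C : ℕ → ℝ := fun j => y j ⬝ᵥ (c j *ᵥ y (j - 1)) with hC
  have claimA : ∀ k l : Fin N,
      (∑ i : Fin n, ∑ j : Fin n, y k i * (blockTri N n b c (k, i) (l, j) * y l j))
        = T (k : ℕ) (l : ℕ) := by
    intro k l
    by_cases h1 : (k : ℕ) = (l : ℕ)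
    · have : k = l := Fin.ext h1
      subst this
      simp only [hT, if_pos rfl, blockTri, if_pos rfl]
      simp [dotProduct, mulVec, Finset.mul_sum, mul_assoc]
    · have hkl : ¬ k = l := fun h => h1 (by rw [h])
      by_cases h2 : (l : ℕ) + 1 = (k : ℕ)
      · simp only [hT, if_neg h1, if_pos h2, blockTri, if_neg hkl]
        simp [dotProduct, mulVec, Finset.mul_sum, mul_assoc]
      · by_cases h3 : (k : ℕ) + 1 = (l : ℕ)
        · simp only [hT, if_neg h1, if_neg h2, if_pos h3, blockTri, if_neg hkl]
          rw [Finset.sum_comm]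
          simp only [dotProduct, mulVec, Finset.mul_sum]
          refine Finset.sum_congr rfl fun j _ => Finset.sum_congr rfl fun i _ => by ring
        · simp only [hT, if_neg h1, if_neg h2, if_neg h3, blockTri, if_neg hkl]
          simp
  have step1 : (fun p : Fin N × Fin n => y p.1 p.2) ⬝ᵥ
      (blockTri N n b c *ᵥ fun p : Fin N × Fin n => y p.1 p.2)
      = ∑ k : Fin N, ∑ l : Fin N, T (k : ℕ) (l : ℕ) := by
    simp only [dotProduct, mulVec, Fintype.sum_prod_type, Finset.mul_sum]
    rw [← Finset.sum_congr rfl fun (k : Fin N) _ =>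
      Finset.sum_congr rfl fun (l : Fin N) _ => (claimA k l)]
    refine Finset.sum_congr rfl fun k _ => ?_
    rw [Finset.sum_comm]
  rw [step1]
  rw [Fin.sum_univ_eq_sum_range (fun kk => ∑ l : Fin N, T kk (l : ℕ))]
  have step2 : ∀ kk ∈ Finset.range N,
      (∑ l : Fin N, T kk (l : ℕ))
        = y kk ⬝ᵥ (b kk *ᵥ y kk) + ((if 1 ≤ kk then C kk else 0)
            + (if kk + 1 < N then C (kk + 1) else 0)) := by
    intro kk hkk
    rw [Finset.mem_range] at hkk
    rw [Fin.sum_univ_eq_sum_range (fun ll => T kk ll)]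
    have pointwise : ∀ ll, T kk ll =
        (if kk = ll then y kk ⬝ᵥ (b kk *ᵥ y kk) else 0)
          + ((if ll + 1 = kk then C kk else 0) + (if kk + 1 = ll then C (kk + 1) else 0)) := by
      intro ll
      simp only [hT, hC]
      by_cases h1 : kk = ll
      · subst h1
        simp
      by_cases h2 : ll + 1 = kk
      · have h3 : ¬ kk + 1 = ll := by omega
        have h4 : kk - 1 = ll := by omega
        rw [if_neg h1, if_pos h2, if_neg h1, if_pos h2, if_neg h3, h4]
        ring
      by_cases h3 : kk + 1 = ll
      · subst h3
        have h4 : kk + 1 - 1 = kk := by omega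
        rw [if_neg h1, if_neg h2, if_pos rfl, if_neg h1, if_neg h2, if_pos rfl, h4]
        ring
      · rw [if_neg h1, if_neg h2, if_neg h3, if_neg h1, if_neg h2, if_neg h3]
        ring
    rw [Finset.sum_congr rfl fun ll _ => pointwise ll]
    rw [Finset.sum_add_distrib, Finset.sum_add_distrib]
    congr 1
    · rw [Finset.sum_ite_eq (Finset.range N) kk fun _ => y kk ⬝ᵥ (b kk *ᵥ y kk),
        if_pos (Finset.mem_range.mpr hkk)]
    congr 1
    · rcases kk with _ | kk'
      · simp
      · rw [show (if 1 ≤ kk' + 1 then C (kk' + 1) else 0) = C (kk' + 1) by simp]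
        rw [Finset.sum_congr rfl (g := fun ll => if ll = kk' then C (kk' + 1) else 0)
          fun ll _ => by
            by_cases h : ll = kk' <;> simp [h] <;> omega]
        rw [Finset.sum_ite_eq' (Finset.range N) kk' fun _ => C (kk' + 1),
          if_pos (Finset.mem_range.mpr (by omega))]
    · rw [Finset.sum_ite_eq (Finset.range N) (kk + 1) fun _ => C (kk + 1)]
      simp [Finset.mem_range]
  rw [Finset.sum_congr rfl step2]
  rw [Finset.sum_add_distrib, Finset.sum_add_distrib]
  have e2 : (∑ kk ∈ Finset.range N, if 1 ≤ kk then C kk else 0)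
      = ∑ j ∈ Finset.Ico 1 N, C j := by
    rw [show Finset.Ico 1 N = (Finset.range N).filter (fun kk => 1 ≤ kk) by
      ext a; simp [Finset.mem_Ico, Finset.mem_range]; omega]
    rw [Finset.sum_filter]
  have e3 : (∑ kk ∈ Finset.range N, if kk + 1 < N then C (kk + 1) else 0)
      = ∑ j ∈ Finset.Ico 1 N, C j := by
    rw [show (∑ kk ∈ Finset.range N, if kk + 1 < N then C (kk + 1) else 0)
        = ∑ kk ∈ (Finset.range N).filter (fun kk => kk + 1 < N), C (kk + 1) from
      (Finset.sum_filter _ _).symm]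
    rw [show (Finset.range N).filter (fun kk => kk + 1 < N) = Finset.range (N - 1) by
      ext a; simp [Finset.mem_range]; omega]
    rw [Finset.sum_Ico_eq_sum_range]
    exact Finset.sum_congr rfl fun i _ => by rw [Nat.add_comm]
  rw [e2, e3, Qf]
  ring

lemma bwdD_last {n : ℕ} (N : ℕ) (b c : ℕ → Matrix (Fin n) (Fin n) ℝ) :
    bwdD N b c (N - 1) = b (N - 1) := by
  unfold bwdD
  rw [show N - 1 - (N - 1) = 0 by omega]
  rfl

lemma bwdD_succ {n : ℕ} {N : ℕ} (b c : ℕ → Matrix (Fin n) (Fin n) ℝ) {t : ℕ}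
    (ht : t + 1 < N) :
    bwdD N b c t = b t - (c (t + 1))ᵀ * (bwdD N b c (t + 1))⁻¹ * c (t + 1) := by
  unfold bwdD
  rw [show N - 1 - t = (N - 1 - (t + 1)) + 1 by omega]
  rw [bwdAux]
  rw [show N - 1 - (N - 1 - (t + 1)) = t + 1 by omega,
    show N - 1 - (N - 1 - (t + 1) + 1) = t by omega]

/-- forward back-substitution vector: `fv b c x k m` is the value at block `k - m`. -/
noncomputable def fv {n : ℕ} (b c : ℕ → Matrix (Fin n) (Fin n) ℝ) (x : Fin n → ℝ)
    (k : ℕ) : ℕ → Fin n → ℝ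
  | 0 => x
  | m + 1 => -(((fwdD b c (k - m - 1))⁻¹ * (c (k - m))ᵀ) *ᵥ fv b c x k m)

/-- backward substitution vector: `gv N b c x t m` is the value at block `t + m`. -/
noncomputable def gv {n : ℕ} (N : ℕ) (b c : ℕ → Matrix (Fin n) (Fin n) ℝ) (x : Fin n → ℝ)
    (t : ℕ) : ℕ → Fin n → ℝ
  | 0 => x
  | m + 1 => -(((bwdD N b c (t + m + 1))⁻¹ * c (t + m + 1)) *ᵥ gv N b c x t m)

lemma fv_shift {n : ℕ} (b c : ℕ → Matrix (Fin n) (Fin n) ℝ) (x : Fin n → ℝ) (k : ℕ) :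
    ∀ m, fv b c x (k + 1) (m + 1) = fv b c (fv b c x (k + 1) 1) k m := by
  intro m
  induction m with
  | zero => rfl
  | succ m ih =>
      show -(((fwdD b c (k + 1 - (m + 1) - 1))⁻¹ * (c (k + 1 - (m + 1)))ᵀ) *ᵥ
          fv b c x (k + 1) (m + 1)) = _
      rw [ih, show k + 1 - (m + 1) - 1 = k - m - 1 by omega,
        show k + 1 - (m + 1) = k - m by omega]
      rfl

lemma gv_shift {n : ℕ} (N : ℕ) (b c : ℕ → Matrix (Fin n) (Fin n) ℝ) (x : Fin n → ℝ)
    (t : ℕ) : ∀ m, gv N b c x t (m + 1) = gv N b c (gv N b c x t 1) (t + 1) m := by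
  intro m
  induction m with
  | zero => rfl
  | succ m ih =>
      show -(((bwdD N b c (t + (m + 1) + 1))⁻¹ * c (t + (m + 1) + 1)) *ᵥ
          gv N b c x t (m + 1)) = _
      rw [ih, show t + (m + 1) + 1 = (t + 1) + m + 1 by omega]
      rfl

lemma top_tel {n : ℕ} (b c : ℕ → Matrix (Fin n) (Fin n) ℝ) :
    ∀ (k : ℕ), (∀ j, j < k → IsUnit (fwdD b c j).det) → ∀ (x : Fin n → ℝ),
    (∑ j ∈ Finset.range (k + 1), fv b c x k (k - j) ⬝ᵥ (b j *ᵥ fv b c x k (k - j)))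
      + 2 * ∑ j ∈ Finset.Ico 1 (k + 1),
          fv b c x k (k - j) ⬝ᵥ (c j *ᵥ fv b c x k (k - (j - 1)))
      = x ⬝ᵥ (fwdD b c k *ᵥ x) := by
  intro k
  induction k with
  | zero =>
      intro _ x
      simp [fv, fwdD]
  | succ k ih =>
      intro hd x
      set x' : Fin n → ℝ := fv b c x (k + 1) 1 with hx'
      have hshift : ∀ j, j ≤ k → fv b c x (k + 1) (k + 1 - j) = fv b c x' k (k - j) := by
        intro j hj
        rw [show k + 1 - j = (k - j) + 1 by omega]
        exact fv_shift b c x k (k - j)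
      rw [Finset.sum_range_succ, Finset.sum_Ico_succ_top (by omega : 1 ≤ k + 1)]
      have e1 : (∑ j ∈ Finset.range (k + 1),
          fv b c x (k + 1) (k + 1 - j) ⬝ᵥ (b j *ᵥ fv b c x (k + 1) (k + 1 - j)))
          = ∑ j ∈ Finset.range (k + 1), fv b c x' k (k - j) ⬝ᵥ (b j *ᵥ fv b c x' k (k - j)) := by
        refine Finset.sum_congr rfl fun j hj => ?_
        rw [Finset.mem_range] at hj
        rw [hshift j (by omega)]
      have e2 : (∑ j ∈ Finset.Ico 1 (k + 1),
          fv b c x (k + 1) (k + 1 - j) ⬝ᵥ (c j *ᵥ fv b c x (k + 1) (k + 1 - (j - 1))))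
          = ∑ j ∈ Finset.Ico 1 (k + 1),
              fv b c x' k (k - j) ⬝ᵥ (c j *ᵥ fv b c x' k (k - (j - 1))) := by
        refine Finset.sum_congr rfl fun j hj => ?_
        rw [Finset.mem_Ico] at hj
        rw [hshift j (by omega), hshift (j - 1) (by omega)]
      have hsum := ih (fun j hj => hd j (by omega)) x'
      rw [e1, e2, show k + 1 - (k + 1) = 0 by omega,
        show k + 1 - (k + 1 - 1) = 1 by omega]
      have goal' : x' ⬝ᵥ (fwdD b c k *ᵥ x') + x ⬝ᵥ (b (k + 1) *ᵥ x)
          + 2 * (x ⬝ᵥ (c (k + 1) *ᵥ x')) = x ⬝ᵥ (fwdD b c (k + 1) *ᵥ x) → 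
          (∑ j ∈ Finset.range (k + 1), fv b c x' k (k - j) ⬝ᵥ (b j *ᵥ fv b c x' k (k - j))) +
            fv b c x (k + 1) 0 ⬝ᵥ (b (k + 1) *ᵥ fv b c x (k + 1) 0) +
          2 * ((∑ j ∈ Finset.Ico 1 (k + 1),
              fv b c x' k (k - j) ⬝ᵥ (c j *ᵥ fv b c x' k (k - (j - 1)))) +
            fv b c x (k + 1) 0 ⬝ᵥ (c (k + 1) *ᵥ fv b c x (k + 1) 1)) =
          x ⬝ᵥ (fwdD b c (k + 1) *ᵥ x) := by
        intro hfin
        show _ + x ⬝ᵥ (b (k + 1) *ᵥ x) + 2 * (_ + x ⬝ᵥ (c (k + 1) *ᵥ x')) = _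
        rw [← hfin, ← hsum]
        ring
      apply goal'
      have hu : IsUnit (fwdD b c k).det := hd k (by omega)
      set d := fwdD b c k with hdd
      set w : Fin n → ℝ := (c (k + 1))ᵀ *ᵥ x with hw
      have hx'w : x' = -(d⁻¹ *ᵥ w) := by
        show -(((fwdD b c (k + 1 - 0 - 1))⁻¹ * (c (k + 1 - 0))ᵀ) *ᵥ x) = _
        rw [show k + 1 - 0 - 1 = k by omega, show k + 1 - 0 = k + 1 by omega,
          ← mulVec_mulVec]
      have t1 : x' ⬝ᵥ (d *ᵥ x') = w ⬝ᵥ (d⁻¹ *ᵥ w) := by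
        rw [hx'w]
        rw [mulVec_neg, dotProduct_neg, neg_dotProduct, neg_neg]
        have hdw : d *ᵥ (d⁻¹ *ᵥ w) = w := by
          rw [mulVec_mulVec, Matrix.mul_nonsing_inv d hu, one_mulVec]
        rw [hdw]
        exact dotProduct_comm _ _
      have t2 : x ⬝ᵥ (c (k + 1) *ᵥ x') = -(w ⬝ᵥ (d⁻¹ *ᵥ w)) := by
        rw [hx'w, mulVec_neg, dotProduct_neg]
        congr 1
        rw [dotProduct_mulVec x (c (k+1)), ← mulVec_transpose, ← hw]
      have t3 : x ⬝ᵥ (fwdD b c (k + 1) *ᵥ x)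
          = x ⬝ᵥ (b (k + 1) *ᵥ x) - w ⬝ᵥ (d⁻¹ *ᵥ w) := by
        show x ⬝ᵥ ((b (k + 1) - c (k + 1) * d⁻¹ * (c (k + 1))ᵀ) *ᵥ x) = _
        rw [sub_mulVec, dotProduct_sub]
        congr 1
        rw [← mulVec_mulVec, ← mulVec_mulVec, ← hw]
        rw [dotProduct_mulVec x (c (k+1)), ← mulVec_transpose, ← hw]
      rw [t1, t2, t3]
      ring

lemma bot_tel {n : ℕ} (N : ℕ) (b c : ℕ → Matrix (Fin n) (Fin n) ℝ) :
    ∀ (m t : ℕ), t + m + 1 = N →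
    (∀ j, t < j → j < N → IsUnit (bwdD N b c j).det) → ∀ (x : Fin n → ℝ),
    (∑ j ∈ Finset.Ico t N, gv N b c x t (j - t) ⬝ᵥ (b j *ᵥ gv N b c x t (j - t)))
      + 2 * ∑ j ∈ Finset.Ico (t + 1) N,
          gv N b c x t (j - t) ⬝ᵥ (c j *ᵥ gv N b c x t (j - 1 - t))
      = x ⬝ᵥ (bwdD N b c t *ᵥ x) := by
  intro m
  induction m with
  | zero =>
      intro t ht _ x
      have htN : t = N - 1 := by omega
      rw [show Finset.Ico t N = {t} by rw [show N = t + 1 by omega, Nat.Ico_succ_singleton]]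
      rw [show Finset.Ico (t + 1) N = ∅ by rw [show N = t + 1 by omega]; simp]
      subst htN
      rw [bwdD_last]
      simp [gv]
  | succ m ih =>
      intro t ht hd x
      set x' : Fin n → ℝ := gv N b c x t 1 with hx'
      have hshift : ∀ j, t + 1 ≤ j → gv N b c x t (j - t) = gv N b c x' (t + 1) (j - (t + 1)) := by
        intro j hj
        rw [show j - t = (j - (t + 1)) + 1 by omega]
        exact gv_shift N b c x t (j - (t + 1))
      have ht1 : t + 1 < N := by omega
      rw [Finset.sum_eq_sum_Ico_succ_bot ht1
        (fun j => gv N b c x t (j - t) ⬝ᵥ (c j *ᵥ gv N b c x t (j - 1 - t)))]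
      rw [Finset.sum_eq_sum_Ico_succ_bot (show t < N by omega)
        (fun j => gv N b c x t (j - t) ⬝ᵥ (b j *ᵥ gv N b c x t (j - t)))]
      have e1 : (∑ j ∈ Finset.Ico (t + 1) N,
          gv N b c x t (j - t) ⬝ᵥ (b j *ᵥ gv N b c x t (j - t)))
          = ∑ j ∈ Finset.Ico (t + 1) N,
              gv N b c x' (t + 1) (j - (t + 1)) ⬝ᵥ (b j *ᵥ gv N b c x' (t + 1) (j - (t + 1))) := by
        refine Finset.sum_congr rfl fun j hj => ?_
        rw [Finset.mem_Ico] at hj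
        rw [hshift j hj.1]
      have e2 : (∑ j ∈ Finset.Ico (t + 1 + 1) N,
          gv N b c x t (j - t) ⬝ᵥ (c j *ᵥ gv N b c x t (j - 1 - t)))
          = ∑ j ∈ Finset.Ico (t + 1 + 1) N,
              gv N b c x' (t + 1) (j - (t + 1)) ⬝ᵥ
                (c j *ᵥ gv N b c x' (t + 1) (j - 1 - (t + 1))) := by
        refine Finset.sum_congr rfl fun j hj => ?_
        rw [Finset.mem_Ico] at hj
        rw [hshift j (by omega), hshift (j - 1) (by omega)]
      have hsum := ih (t + 1) (by omega) (fun j hj hjN => hd j (by omega) hjN) x'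
      rw [e1, e2]
      rw [show t - t = 0 by omega, show t + 1 - t = 1 by omega, show t + 1 - 1 - t = 0 by omega]
      have goal' : x ⬝ᵥ (b t *ᵥ x) + x' ⬝ᵥ (bwdD N b c (t + 1) *ᵥ x')
          + 2 * (x' ⬝ᵥ (c (t + 1) *ᵥ x)) = x ⬝ᵥ (bwdD N b c t *ᵥ x) →
          gv N b c x t 0 ⬝ᵥ (b t *ᵥ gv N b c x t 0) +
            (∑ j ∈ Finset.Ico (t + 1) N, gv N b c x' (t + 1) (j - (t + 1)) ⬝ᵥ
              (b j *ᵥ gv N b c x' (t + 1) (j - (t + 1)))) +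
          2 * (gv N b c x t 1 ⬝ᵥ (c (t + 1) *ᵥ gv N b c x t 0) +
            ∑ j ∈ Finset.Ico (t + 1 + 1) N, gv N b c x' (t + 1) (j - (t + 1)) ⬝ᵥ
              (c j *ᵥ gv N b c x' (t + 1) (j - 1 - (t + 1)))) =
          x ⬝ᵥ (bwdD N b c t *ᵥ x) := by
        intro hfin
        show x ⬝ᵥ (b t *ᵥ x) + _ + 2 * (x' ⬝ᵥ (c (t + 1) *ᵥ x) + _) = _
        rw [← hfin]
        have : (∑ j ∈ Finset.Ico (t + 1) N, gv N b c x' (t + 1) (j - (t + 1)) ⬝ᵥ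
              (b j *ᵥ gv N b c x' (t + 1) (j - (t + 1)))) +
            2 * ∑ j ∈ Finset.Ico (t + 1 + 1) N, gv N b c x' (t + 1) (j - (t + 1)) ⬝ᵥ
              (c j *ᵥ gv N b c x' (t + 1) (j - 1 - (t + 1)))
            = x' ⬝ᵥ (bwdD N b c (t + 1) *ᵥ x') := hsum
        rw [← this]
        ring
      apply goal'
      -- algebra
      have hu : IsUnit (bwdD N b c (t + 1)).det := hd (t + 1) (by omega) ht1
      set e : Matrix (Fin n) (Fin n) ℝ := bwdD N b c (t + 1) with he
      have hx'w : x' = -(e⁻¹ *ᵥ (c (t + 1) *ᵥ x)) := by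
        show -(((bwdD N b c (t + 0 + 1))⁻¹ * c (t + 0 + 1)) *ᵥ x) = _
        rw [show t + 0 + 1 = t + 1 by omega, ← mulVec_mulVec]
      set w : Fin n → ℝ := c (t + 1) *ᵥ x with hw
      have t1 : x' ⬝ᵥ (e *ᵥ x') = w ⬝ᵥ (e⁻¹ *ᵥ w) := by
        rw [hx'w, mulVec_neg, dotProduct_neg, neg_dotProduct, neg_neg]
        have hew : e *ᵥ (e⁻¹ *ᵥ w) = w := by
          rw [mulVec_mulVec, Matrix.mul_nonsing_inv e hu, one_mulVec]
        rw [hew]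
        exact dotProduct_comm _ _
      have t2 : x' ⬝ᵥ (c (t + 1) *ᵥ x) = -(w ⬝ᵥ (e⁻¹ *ᵥ w)) := by
        rw [hx'w, neg_dotProduct]
        congr 1
        exact dotProduct_comm _ _
      have t3 : x ⬝ᵥ (bwdD N b c t *ᵥ x) = x ⬝ᵥ (b t *ᵥ x) - w ⬝ᵥ (e⁻¹ *ᵥ w) := by
        rw [bwdD_succ b c ht1]
        rw [sub_mulVec, dotProduct_sub]
        congr 1
        rw [← mulVec_mulVec, ← mulVec_mulVec, ← hw]
        rw [dotProduct_mulVec x ((c (t+1))ᵀ), ← mulVec_transpose, transpose_transpose, ← hw]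
      rw [t1, t2, t3]
      ring

lemma dps_nonneg {n : ℕ} (v : Fin n → ℝ) : 0 ≤ v ⬝ᵥ v :=
  Finset.sum_nonneg fun i _ => mul_self_nonneg (v i)

lemma dps_pos {n : ℕ} {v : Fin n → ℝ} (hv : v ≠ 0) : 0 < v ⬝ᵥ v := by
  obtain ⟨i, hi⟩ := Function.ne_iff.mp hv
  refine Finset.sum_pos' (fun j _ => mul_self_nonneg (v j)) ⟨i, Finset.mem_univ i, ?_⟩
  exact mul_self_pos.mpr hi

lemma fwd_symm {n N : ℕ} {b c : ℕ → Matrix (Fin n) (Fin n) ℝ}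
    (hbs : ∀ j, j < N → (b j)ᵀ = b j) :
    ∀ k, k < N → (fwdD b c k)ᵀ = fwdD b c k := by
  intro k
  induction k with
  | zero => intro hk; exact hbs 0 hk
  | succ k ih =>
      intro hk
      show (b (k + 1) - c (k + 1) * (fwdD b c k)⁻¹ * (c (k + 1))ᵀ)ᵀ = _
      rw [transpose_sub, hbs (k + 1) hk, transpose_mul, transpose_mul, transpose_transpose,
        transpose_nonsing_inv, ih (by omega), ← mul_assoc]
      rfl

lemma bwdAux_symm {n N : ℕ} {b c : ℕ → Matrix (Fin n) (Fin n) ℝ}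
    (hN : 0 < N) (hbs : ∀ j, j < N → (b j)ᵀ = b j) :
    ∀ m, (bwdAux N b c m)ᵀ = bwdAux N b c m := by
  intro m
  induction m with
  | zero => exact hbs (N - 1) (by omega)
  | succ m ih =>
      show (b (N - 1 - (m + 1)) - (c (N - 1 - m))ᵀ * (bwdAux N b c m)⁻¹ * c (N - 1 - m))ᵀ = _
      rw [transpose_sub, hbs (N - 1 - (m + 1)) (by omega), transpose_mul, transpose_mul,
        transpose_transpose, transpose_nonsing_inv, ih, ← mul_assoc]
      rfl

lemma bwd_symm {n N : ℕ} {b c : ℕ → Matrix (Fin n) (Fin n) ℝ}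
    (hN : 0 < N) (hbs : ∀ j, j < N → (b j)ᵀ = b j) (t : ℕ) :
    (bwdD N b c t)ᵀ = bwdD N b c t :=
  bwdAux_symm hN hbs _

lemma herm_of_symm {n : ℕ} {M : Matrix (Fin n) (Fin n) ℝ} (h : Mᵀ = M) : M.IsHermitian := by
  rw [Matrix.IsHermitian, conjTranspose_eq_transpose_of_trivial, h]

lemma fwd_posdef {n N : ℕ} {b c : ℕ → Matrix (Fin n) (Fin n) ℝ} {αL : ℝ} (hαL : 0 < αL)
    (hbs : ∀ j, j < N → (b j)ᵀ = b j)
    (hQl : ∀ y : ℕ → Fin n → ℝ,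
      αL * (∑ j ∈ Finset.range N, y j ⬝ᵥ y j) ≤ Qf N n b c y) :
    ∀ k, k < N → (fwdD b c k).PosDef := by
  intro k
  induction k using Nat.strong_induction_on with
  | _ k ih =>
    intro hk
    refine posDef_iff_dotProduct_mulVec.mpr ⟨herm_of_symm (fwd_symm hbs k hk), fun x hx => ?_⟩
    rw [star_trivial]
    set y : ℕ → Fin n → ℝ := fun j => if j ≤ k then fv b c x k (k - j) else 0 with hy
    have hyk : y k = x := by
      show (if k ≤ k then fv b c x k (k - k) else 0) = x
      rw [if_pos le_rfl, Nat.sub_self]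
      rfl
    have hD : (∑ j ∈ Finset.range N, y j ⬝ᵥ (b j *ᵥ y j))
        = ∑ j ∈ Finset.range (k + 1), fv b c x k (k - j) ⬝ᵥ (b j *ᵥ fv b c x k (k - j)) := by
      rw [← Finset.sum_subset (Finset.range_subset_range.mpr (by omega : k + 1 ≤ N))
        (fun j _ hj => by
          rw [Finset.mem_range] at hj
          show (if j ≤ k then _ else (0 : Fin n → ℝ)) ⬝ᵥ _ = 0
          rw [if_neg (by omega), zero_dotProduct])]
      refine Finset.sum_congr rfl fun j hj => ?_
      rw [Finset.mem_range] at hj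
      show (if j ≤ k then _ else (0 : Fin n → ℝ)) ⬝ᵥ (b j *ᵥ (if j ≤ k then _ else 0)) = _
      rw [if_pos (by omega : j ≤ k)]
    have hC : (∑ j ∈ Finset.Ico 1 N, y j ⬝ᵥ (c j *ᵥ y (j - 1)))
        = ∑ j ∈ Finset.Ico 1 (k + 1),
            fv b c x k (k - j) ⬝ᵥ (c j *ᵥ fv b c x k (k - (j - 1))) := by
      rw [← Finset.sum_subset (Finset.Ico_subset_Ico le_rfl (by omega : k + 1 ≤ N))
        (fun j hjN hj => by
          rw [Finset.mem_Ico] at hjN hj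
          show (if j ≤ k then _ else (0 : Fin n → ℝ)) ⬝ᵥ _ = 0
          rw [if_neg (by omega), zero_dotProduct])]
      refine Finset.sum_congr rfl fun j hj => ?_
      rw [Finset.mem_Ico] at hj
      show (if j ≤ k then _ else (0 : Fin n → ℝ)) ⬝ᵥ
          (c j *ᵥ (if j - 1 ≤ k then _ else 0)) = _
      rw [if_pos (by omega : j ≤ k), if_pos (by omega : j - 1 ≤ k)]
    have hQy : Qf N n b c y = x ⬝ᵥ (fwdD b c k *ᵥ x) := by
      rw [Qf, hD, hC]
      exact top_tel b c k (fun j hj => ((ih j hj (by omega)).det_pos.ne').isUnit) x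
    have hS : x ⬝ᵥ x ≤ ∑ j ∈ Finset.range N, y j ⬝ᵥ y j := by
      have := Finset.single_le_sum (f := fun j => y j ⬝ᵥ y j)
        (fun j _ => dps_nonneg (y j)) (Finset.mem_range.mpr hk)
      simpa only [hyk] using this
    have := hQl y
    rw [hQy] at this
    have h1 : 0 < αL * (x ⬝ᵥ x) := mul_pos hαL (dps_pos hx)
    nlinarith [hS, this, h1, mul_le_mul_of_nonneg_left hS (le_of_lt hαL)]

lemma bwd_posdef {n N : ℕ} {b c : ℕ → Matrix (Fin n) (Fin n) ℝ} {αL : ℝ} (hαL : 0 < αL)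
    (hN : 0 < N)
    (hbs : ∀ j, j < N → (b j)ᵀ = b j)
    (hQl : ∀ y : ℕ → Fin n → ℝ,
      αL * (∑ j ∈ Finset.range N, y j ⬝ᵥ y j) ≤ Qf N n b c y) :
    ∀ m t, t + m + 1 = N → (bwdD N b c t).PosDef := by
  intro m
  induction m using Nat.strong_induction_on with
  | _ m ih =>
    intro t ht
    refine posDef_iff_dotProduct_mulVec.mpr ⟨herm_of_symm (bwd_symm hN hbs t), fun x hx => ?_⟩
    rw [star_trivial]
    set y : ℕ → Fin n → ℝ := fun j => if t ≤ j ∧ j < N then gv N b c x t (j - t) else 0 with hy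
    have hyt : y t = x := by
      show (if t ≤ t ∧ t < N then gv N b c x t (t - t) else 0) = x
      rw [if_pos ⟨le_rfl, by omega⟩, Nat.sub_self]
      rfl
    have hD : (∑ j ∈ Finset.range N, y j ⬝ᵥ (b j *ᵥ y j))
        = ∑ j ∈ Finset.Ico t N, gv N b c x t (j - t) ⬝ᵥ (b j *ᵥ gv N b c x t (j - t)) := by
      rw [← Finset.sum_subset (show Finset.Ico t N ⊆ Finset.range N from fun j hj => by
            rw [Finset.mem_Ico] at hj; exact Finset.mem_range.mpr hj.2)
        (fun j hjN hj => by
          rw [Finset.mem_range] at hjN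
          rw [Finset.mem_Ico] at hj
          show (if t ≤ j ∧ j < N then _ else (0 : Fin n → ℝ)) ⬝ᵥ _ = 0
          rw [if_neg (by omega), zero_dotProduct])]
      refine Finset.sum_congr rfl fun j hj => ?_
      rw [Finset.mem_Ico] at hj
      show (if t ≤ j ∧ j < N then _ else (0 : Fin n → ℝ)) ⬝ᵥ
          (b j *ᵥ (if t ≤ j ∧ j < N then _ else 0)) = _
      rw [if_pos (by omega : t ≤ j ∧ j < N)]
    have hC : (∑ j ∈ Finset.Ico 1 N, y j ⬝ᵥ (c j *ᵥ y (j - 1)))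
        = ∑ j ∈ Finset.Ico (t + 1) N,
            gv N b c x t (j - t) ⬝ᵥ (c j *ᵥ gv N b c x t (j - 1 - t)) := by
      rw [← Finset.sum_subset (Finset.Ico_subset_Ico (by omega : 1 ≤ t + 1) le_rfl)
        (fun j hjN hj => by
          rw [Finset.mem_Ico] at hjN hj
          show _ ⬝ᵥ (c j *ᵥ (if t ≤ j - 1 ∧ j - 1 < N then _ else (0 : Fin n → ℝ))) = 0
          rw [if_neg (by omega), mulVec_zero, dotProduct_zero])]
      refine Finset.sum_congr rfl fun j hj => ?_
      rw [Finset.mem_Ico] at hj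
      show (if t ≤ j ∧ j < N then _ else (0 : Fin n → ℝ)) ⬝ᵥ
          (c j *ᵥ (if t ≤ j - 1 ∧ j - 1 < N then _ else 0)) = _
      rw [if_pos (by omega : t ≤ j ∧ j < N), if_pos (by omega : t ≤ j - 1 ∧ j - 1 < N)]
    have hQy : Qf N n b c y = x ⬝ᵥ (bwdD N b c t *ᵥ x) := by
      rw [Qf, hD, hC]
      refine bot_tel N b c m t ht (fun j hj hjN => ?_) x
      exact ((ih (N - 1 - j) (by omega) j (by omega)).det_pos.ne').isUnit
    have hS : x ⬝ᵥ x ≤ ∑ j ∈ Finset.range N, y j ⬝ᵥ y j := by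
      have := Finset.single_le_sum (f := fun j => y j ⬝ᵥ y j)
        (fun j _ => dps_nonneg (y j)) (Finset.mem_range.mpr (show t < N by omega))
      simpa only [hyt] using this
    have := hQl y
    rw [hQy] at this
    nlinarith [hS, this, mul_pos hαL (dps_pos hx),
      mul_le_mul_of_nonneg_left hS (le_of_lt hαL)]

lemma diag_quad {n : ℕ} (N : ℕ) (b c : ℕ → Matrix (Fin n) (Fin n) ℝ) {k : ℕ} (hk : k < N)
    (x : Fin n → ℝ) :
    Qf N n b c (fun j => if j = k then x else 0) = x ⬝ᵥ (b k *ᵥ x) := by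
  rw [Qf]
  have hD : (∑ j ∈ Finset.range N,
      (if j = k then x else 0) ⬝ᵥ (b j *ᵥ (if j = k then x else 0))) = x ⬝ᵥ (b k *ᵥ x) := by
    rw [Finset.sum_eq_single k]
    · rw [if_pos rfl]
    · intro j _ hj
      rw [if_neg hj, zero_dotProduct]
    · intro h
      exact absurd (Finset.mem_range.mpr hk) h
  have hC : (∑ j ∈ Finset.Ico 1 N,
      (if j = k then x else 0) ⬝ᵥ (c j *ᵥ (if j - 1 = k then x else 0))) = 0 := by
    refine Finset.sum_eq_zero fun j hj => ?_
    rw [Finset.mem_Ico] at hj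
    by_cases h : j = k
    · rw [if_neg (by omega : ¬ j - 1 = k), mulVec_zero, dotProduct_zero]
    · rw [if_neg h, zero_dotProduct]
  rw [hD, hC]
  ring

lemma diag_sq {n : ℕ} (N : ℕ) {k : ℕ} (hk : k < N) (x : Fin n → ℝ) :
    (∑ j ∈ Finset.range N, (if j = k then x else 0) ⬝ᵥ (if j = k then x else (0 : Fin n → ℝ)))
      = x ⬝ᵥ x := by
  rw [Finset.sum_eq_single k]
  · rw [if_pos rfl]
  · intro j _ hj
    rw [if_neg hj, zero_dotProduct]
  · intro h
    exact absurd (Finset.mem_range.mpr hk) h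

lemma fwd_upper {n N : ℕ} {b c : ℕ → Matrix (Fin n) (Fin n) ℝ}
    (hfp : ∀ j, j < N → (fwdD b c j).PosDef) {k : ℕ} (hk : k < N) (x : Fin n → ℝ) :
    x ⬝ᵥ (fwdD b c k *ᵥ x) ≤ x ⬝ᵥ (b k *ᵥ x) := by
  cases k with
  | zero => exact le_of_eq rfl
  | succ k =>
      show x ⬝ᵥ ((b (k + 1) - c (k + 1) * (fwdD b c k)⁻¹ * (c (k + 1))ᵀ) *ᵥ x) ≤ _
      rw [sub_mulVec, dotProduct_sub]
      have h0 : 0 ≤ x ⬝ᵥ ((c (k + 1) * (fwdD b c k)⁻¹ * (c (k + 1))ᵀ) *ᵥ x) := by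
        have hpsd := ((hfp k (by omega)).inv).posSemidef
        have := hpsd.dotProduct_mulVec_nonneg ((c (k + 1))ᵀ *ᵥ x)
        rw [star_trivial] at this
        rw [← mulVec_mulVec, ← mulVec_mulVec,
          dotProduct_mulVec x (c (k + 1)), ← mulVec_transpose]
        exact this
      linarith

lemma bwd_upper {n N : ℕ} {b c : ℕ → Matrix (Fin n) (Fin n) ℝ} (hN : 0 < N)
    (hbp : ∀ t, t < N → (bwdD N b c t).PosDef) {k : ℕ} (hk : k < N) (x : Fin n → ℝ) :
    x ⬝ᵥ (bwdD N b c k *ᵥ x) ≤ x ⬝ᵥ (b k *ᵥ x) := by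
  by_cases hlast : k + 1 < N
  · rw [bwdD_succ b c hlast, sub_mulVec, dotProduct_sub]
    have h0 : 0 ≤ x ⬝ᵥ (((c (k + 1))ᵀ * (bwdD N b c (k + 1))⁻¹ * c (k + 1)) *ᵥ x) := by
      have hpsd := ((hbp (k + 1) hlast).inv).posSemidef
      have := hpsd.dotProduct_mulVec_nonneg (c (k + 1) *ᵥ x)
      rw [star_trivial] at this
      rw [← mulVec_mulVec, ← mulVec_mulVec,
        dotProduct_mulVec x ((c (k + 1))ᵀ), ← mulVec_transpose, transpose_transpose]
      exact this
    linarith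
  · have : k = N - 1 := by omega
    subst this
    rw [bwdD_last]

lemma Ysq_eq (N n : ℕ) (y : ℕ → Fin n → ℝ) :
    ((fun p : Fin N × Fin n => y p.1 p.2) ⬝ᵥ fun p : Fin N × Fin n => y p.1 p.2)
      = ∑ j ∈ Finset.range N, y j ⬝ᵥ y j := by
  rw [show ((fun p : Fin N × Fin n => y p.1 p.2) ⬝ᵥ fun p : Fin N × Fin n => y p.1 p.2)
      = ∑ kk : Fin N, y kk ⬝ᵥ y kk by
    simp [dotProduct, Fintype.sum_prod_type]]
  exact Fin.sum_univ_eq_sum_range (fun kk => y kk ⬝ᵥ y kk) N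


end MFaux

/-- If the symmetric positive definite block tridiagonal matrix `A` has
all eigenvalues in `[αL, αU]` with `0 < αL`, then for every `k` the combined (Mayne–Fraser)
block `d_k^f + d_k^b − b_k` is symmetric with all eigenvalues in `[αL, αU]`. -/
theorem stmt12 (N n : ℕ) [NeZero N] [NeZero n]
    (b c : ℕ → Matrix (Fin n) (Fin n) ℝ)
    (A : Matrix (Fin N × Fin n) (Fin N × Fin n) ℝ) (hAdef : A = blockTri N n b c)
    (hA : A.PosDef)
    (αL αU : ℝ) (hαL : 0 < αL)
    (hbd : ∀ i, αL ≤ hA.1.eigenvalues i ∧ hA.1.eigenvalues i ≤ αU) :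
    ∀ k < N, ∃ h : (fwdD b c k + bwdD N b c k - b k).IsHermitian,
      ∀ i, αL ≤ h.eigenvalues i ∧ h.eigenvalues i ≤ αU := by
  
  intro k hk
  have hN : 0 < N := Nat.pos_of_ne_zero (NeZero.ne N)
  have hbs : ∀ j, j < N → (b j)ᵀ = b j := by
    intro j hj
    ext i i'
    have h1 := congrFun (congrFun hA.1 (⟨j, hj⟩, i)) (⟨j, hj⟩, i')
    rw [conjTranspose_apply, star_trivial] at h1
    rw [hAdef] at h1
    show b j i' i = b j i i'
    have e1 : blockTri N n b c ((⟨j, hj⟩ : Fin N), i') ((⟨j, hj⟩ : Fin N), i) = b j i' i := by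
      rw [blockTri, if_pos rfl]
    have e2 : blockTri N n b c ((⟨j, hj⟩ : Fin N), i) ((⟨j, hj⟩ : Fin N), i') = b j i i' := by
      rw [blockTri, if_pos rfl]
    rw [e1, e2] at h1
    exact h1
  have hQb : ∀ y : ℕ → Fin n → ℝ,
      αL * (∑ j ∈ Finset.range N, y j ⬝ᵥ y j) ≤ Qf N n b c y ∧
        Qf N n b c y ≤ αU * (∑ j ∈ Finset.range N, y j ⬝ᵥ y j) := by
    intro y
    have h := quad_bounds hA.1 hbd (fun p : Fin N × Fin n => y p.1 p.2)
    rw [hAdef, Qform N n b c y, Ysq_eq N n y] at h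
    exact h
  have hQl : ∀ y : ℕ → Fin n → ℝ,
      αL * (∑ j ∈ Finset.range N, y j ⬝ᵥ y j) ≤ Qf N n b c y := fun y => (hQb y).1
  have hfp : ∀ j, j < N → (fwdD b c j).PosDef := fwd_posdef hαL hbs hQl
  have hbp : ∀ t, t < N → (bwdD N b c t).PosDef := fun t ht =>
    bwd_posdef hαL hN hbs hQl (N - 1 - t) t (by omega)
  have hherm : (fwdD b c k + bwdD N b c k - b k).IsHermitian := by
    refine herm_of_symm ?_
    rw [transpose_sub, transpose_add, fwd_symm hbs k hk, bwd_symm hN hbs k, hbs k hk]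
  refine ⟨hherm, fun i => ?_⟩
  refine eig_bounds hherm (fun x => ?_) i
  have hexp : x ⬝ᵥ ((fwdD b c k + bwdD N b c k - b k) *ᵥ x)
      = x ⬝ᵥ (fwdD b c k *ᵥ x) + x ⬝ᵥ (bwdD N b c k *ᵥ x) - x ⬝ᵥ (b k *ᵥ x) := by
    rw [sub_mulVec, add_mulVec, dotProduct_sub, dotProduct_add]
  -- upper bound on x ⬝ᵥ b k x
  have hbub : x ⬝ᵥ (b k *ᵥ x) ≤ αU * (x ⬝ᵥ x) := by
    have := (hQb (fun j => if j = k then x else 0)).2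
    rwa [diag_quad N b c hk x, diag_sq N hk x] at this
  -- the Mayne–Fraser extension vector
  set y : ℕ → Fin n → ℝ := fun j =>
    if j ≤ k then fv b c x k (k - j) else if j < N then gv N b c x k (j - k) else 0 with hy
  have hyk : y k = x := by
    show (if k ≤ k then fv b c x k (k - k) else _) = x
    rw [if_pos le_rfl, Nat.sub_self]
    rfl
  have htop := top_tel b c k (fun j hj => ((hfp j (by omega)).det_pos.ne').isUnit) x
  have hbot := bot_tel N b c (N - 1 - k) k (by omega)
    (fun j hj hjN => ((hbp j hjN).det_pos.ne').isUnit) x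
  have hDsplit : (∑ j ∈ Finset.range N, y j ⬝ᵥ (b j *ᵥ y j))
      = (∑ j ∈ Finset.range (k + 1), fv b c x k (k - j) ⬝ᵥ (b j *ᵥ fv b c x k (k - j)))
        + ∑ j ∈ Finset.Ico (k + 1) N,
            gv N b c x k (j - k) ⬝ᵥ (b j *ᵥ gv N b c x k (j - k)) := by
    rw [Finset.range_eq_Ico,
      ← Finset.sum_Ico_consecutive _ (Nat.zero_le (k + 1)) (show k + 1 ≤ N by omega)]
    congr 1
    · rw [← Finset.range_eq_Ico]
      refine Finset.sum_congr rfl fun j hj => ?_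
      rw [Finset.mem_range] at hj
      show (if j ≤ k then _ else _) ⬝ᵥ (b j *ᵥ (if j ≤ k then _ else _)) = _
      rw [if_pos (by omega : j ≤ k)]
    · refine Finset.sum_congr rfl fun j hj => ?_
      rw [Finset.mem_Ico] at hj
      show (if j ≤ k then _ else _) ⬝ᵥ (b j *ᵥ (if j ≤ k then _ else _)) = _
      rw [if_neg (by omega : ¬ j ≤ k), if_pos (by omega : j < N)]
  have hCsplit : (∑ j ∈ Finset.Ico 1 N, y j ⬝ᵥ (c j *ᵥ y (j - 1)))
      = (∑ j ∈ Finset.Ico 1 (k + 1),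
            fv b c x k (k - j) ⬝ᵥ (c j *ᵥ fv b c x k (k - (j - 1))))
        + ∑ j ∈ Finset.Ico (k + 1) N,
            gv N b c x k (j - k) ⬝ᵥ (c j *ᵥ gv N b c x k (j - 1 - k)) := by
    rw [← Finset.sum_Ico_consecutive _ (show 1 ≤ k + 1 by omega) (show k + 1 ≤ N by omega)]
    congr 1
    · refine Finset.sum_congr rfl fun j hj => ?_
      rw [Finset.mem_Ico] at hj
      show (if j ≤ k then _ else _) ⬝ᵥ (c j *ᵥ (if j - 1 ≤ k then _ else _)) = _
      rw [if_pos (by omega : j ≤ k), if_pos (by omega : j - 1 ≤ k)]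
    · refine Finset.sum_congr rfl fun j hj => ?_
      rw [Finset.mem_Ico] at hj
      show (if j ≤ k then _ else _) ⬝ᵥ (c j *ᵥ _) = _
      rw [if_neg (by omega : ¬ j ≤ k), if_pos (by omega : j < N)]
      have hyj : y (j - 1) = gv N b c x k (j - 1 - k) := by
        by_cases hj1 : j - 1 ≤ k
        · show (if j - 1 ≤ k then fv b c x k (k - (j - 1)) else _) = _
          rw [if_pos hj1, show k - (j - 1) = 0 by omega, show j - 1 - k = 0 by omega]
          rfl
        · show (if j - 1 ≤ k then _ else if j - 1 < N then gv N b c x k (j - 1 - k) else _) = _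
          rw [if_neg hj1, if_pos (by omega : j - 1 < N)]
      rw [hyj]
  -- peel the bottom corner term from hbot
  rw [Finset.sum_eq_sum_Ico_succ_bot (show k < N by omega)
    (fun j => gv N b c x k (j - k) ⬝ᵥ (b j *ᵥ gv N b c x k (j - k)))] at hbot
  rw [Nat.sub_self] at hbot
  have hgv0 : gv N b c x k 0 = x := rfl
  rw [hgv0] at hbot
  have hQy : Qf N n b c y = x ⬝ᵥ (fwdD b c k *ᵥ x) + x ⬝ᵥ (bwdD N b c k *ᵥ x)
      - x ⬝ᵥ (b k *ᵥ x) := by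
    rw [Qf, hDsplit, hCsplit]
    linarith [htop, hbot]
  have hS : x ⬝ᵥ x ≤ ∑ j ∈ Finset.range N, y j ⬝ᵥ y j := by
    have := Finset.single_le_sum (f := fun j => y j ⬝ᵥ y j)
      (fun j _ => dps_nonneg (y j)) (Finset.mem_range.mpr hk)
    simpa only [hyk] using this
  constructor
  · -- lower bound
    have h1 := hQl y
    rw [hQy] at h1
    rw [hexp]
    nlinarith [mul_le_mul_of_nonneg_left hS (le_of_lt hαL)]
  · -- upper bound
    rw [hexp]
    have h1 := fwd_upper hfp hk x
    have h2 := bwd_upper hN hbp hk x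
    linarith
end
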